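/- If every homomorphic image of every injective R-module is Q-copure Baer injective, then R is left Q-copure hereditary, i.e., every Q-copure left ideal of R is projective. -/

import Mathlib

universe u

open CategoryTheory

variable {R : Type u}

/-- A linear map `f : A → B` is `Q`-copure if every module in `Q` is injective
relative to `f`. -/
def IsCopure [Ring R] (Q : ModuleCat.{u} R → Prop) {A B : Type u}
    [AddCommGroup A] [Module R A] [AddCommGroup B] [Module R B] (f : A →ₗ[R] B) : Prop :=
  ∀ M : ModuleCat.{u} R, Q M → ∀ g : A →ₗ[R] M, ∃ h : B →ₗ[R] M, ∀ a : A, h (f a) = g a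

/-- A left ideal `I` of `R` is `Q`-copure if every module in `Q` is injective
relative to the inclusion `I → R`. -/
def CopureIdeal [Ring R] (Q : ModuleCat.{u} R → Prop) (I : Ideal R) : Prop :=
  ∀ M : ModuleCat.{u} R, Q M → ∀ g : I →ₗ[R] M, ∃ h : R →ₗ[R] M, ∀ x : I, h x = g x

/-- `N` is `Q`-copure Baer injective if every homomorphism from a `Q`-copure
left ideal of `R` into `N` extends to `R`. -/
def CopureBaerInjective [Ring R] (Q : ModuleCat.{u} R → Prop) (N : Type*)
    [AddCommGroup N] [Module R N] : Prop :=
  ∀ I : Ideal R, CopureIdeal Q I → ∀ g : I →ₗ[R] N, ∃ h : R →ₗ[R] N, ∀ x : I, h x = g x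

theorem hereditary_of_images_of_injectives [Ring R] (Q : ModuleCat.{u} R → Prop)
    (h : ∀ (E N : Type u) [AddCommGroup E] [Module R E] [AddCommGroup N] [Module R N],
      Module.Injective R E → (∃ g : E →ₗ[R] N, Function.Surjective g) →
        CopureBaerInjective Q N) :
    ∀ I : Ideal R, CopureIdeal Q I → Module.Projective R I := by
  intro I hI
  classical
  -- free cover of I
  let F := (I →₀ R)
  let π : F →ₗ[R] I := Finsupp.linearCombination R id
  have hπ : Function.Surjective π := fun i =>
    ⟨Finsupp.single i 1, by rw [Finsupp.linearCombination_single, one_smul]; rfl⟩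
  -- embed F into an injective module E
  let Ecat := Injective.under (ModuleCat.of R F)
  let ι : F →ₗ[R] Ecat := (Injective.ι (ModuleCat.of R F)).hom
  have hι : Function.Injective ι :=
    (ModuleCat.mono_iff_injective (Injective.ι (ModuleCat.of R F))).mp inferInstance
  haveI : CategoryTheory.Injective (ModuleCat.of R Ecat) :=
    inferInstanceAs (CategoryTheory.Injective Ecat)
  have hinjE : Module.Injective R Ecat :=
    Module.injective_module_of_injective_object R Ecat
  -- the quotient N = E / ι(ker π)
  let K : Submodule R Ecat := (LinearMap.ker π).map ι
  let N := Ecat ⧸ K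
  have hle : LinearMap.ker π ≤ K.comap ι := fun x hx =>
    Submodule.mem_map_of_mem hx
  -- the induced map g : I → N
  let e : (F ⧸ LinearMap.ker π) ≃ₗ[R] I := π.quotKerEquivOfSurjective hπ
  let g : I →ₗ[R] N := (Submodule.mapQ (LinearMap.ker π) K ι hle).comp
    (e.symm : I →ₗ[R] F ⧸ LinearMap.ker π)
  have hg : ∀ x : F, g (π x) = K.mkQ (ι x) := by
    intro x
    have h1 : e.symm (π x) = Submodule.Quotient.mk x := by
      rw [LinearEquiv.symm_apply_eq]
      rfl
    show (Submodule.mapQ (LinearMap.ker π) K ι hle) (e.symm (π x)) = _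
    rw [h1]
    rfl
  -- N is Q-copure Baer injective
  have hN : CopureBaerInjective Q N :=
    h Ecat N hinjE ⟨K.mkQ, Submodule.mkQ_surjective K⟩
  obtain ⟨hmap, hext⟩ := hN I hI g
  -- lift hmap 1 to e₀ : E
  obtain ⟨e₀, he₀⟩ := Submodule.mkQ_surjective K (hmap 1)
  -- the splitting map through the range of ι
  let S := LinearMap.range ι
  let eS : F ≃ₗ[R] S := LinearEquiv.ofInjective ι hι
  let τ : I →ₗ[R] Ecat := (LinearMap.toSpanSingleton R Ecat e₀).comp I.subtype
  have hτmem : ∀ i : I, τ i ∈ S := by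
    intro i
    obtain ⟨x, hx⟩ := hπ i
    have h2 : K.mkQ ((i : R) • e₀) = K.mkQ (ι x) := by
      rw [← hg x, hx]
      rw [← hext i]
      have : hmap (i : R) = (i : R) • hmap 1 := by
        rw [← map_smul, smul_eq_mul, mul_one]
      rw [this, ← he₀, ← map_smul]
    have h3 : (i : R) • e₀ - ι x ∈ K := (Submodule.Quotient.eq K).mp h2
    obtain ⟨k, hk, hk2⟩ := h3
    have : (i : R) • e₀ = ι (x + k) := by
      rw [map_add, hk2]; abel
    exact ⟨x + k, this.symm⟩
  let σ : I →ₗ[R] S := τ.codRestrict S hτmem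
  let p : S →ₗ[R] I := π.comp (eS.symm : S →ₗ[R] F)
  have hsplit : p.comp σ = LinearMap.id := by
    ext i
    obtain ⟨x, hx⟩ := hπ i
    -- same computation as above to get the witness
    have h2 : K.mkQ ((i : R) • e₀) = K.mkQ (ι x) := by
      rw [← hg x, hx, ← hext i]
      have : hmap (i : R) = (i : R) • hmap 1 := by
        rw [← map_smul, smul_eq_mul, mul_one]
      rw [this, ← he₀, ← map_smul]
    have h3 : (i : R) • e₀ - ι x ∈ K := (Submodule.Quotient.eq K).mp h2
    obtain ⟨k, hk, hk2⟩ := h3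
    have h4 : (i : R) • e₀ = ι (x + k) := by
      rw [map_add, hk2]; abel
    have h5 : σ i = eS (x + k) := by
      apply Subtype.ext
      show τ i = ι (x + k)
      simpa [τ, LinearMap.toSpanSingleton_apply] using h4
    have h6 : p (σ i) = i := by
      rw [h5]
      show π (eS.symm (eS (x + k))) = i
      rw [LinearEquiv.symm_apply_apply, map_add, hx]
      have hk0 : π k = 0 := hk
      rw [hk0, add_zero]
    exact congrArg Subtype.val h6
  haveI : Module.Projective R S := Module.Projective.of_equiv eS
  exact Module.Projective.of_split σ p hsplit
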